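/- arXiv:1308.6089 — 6 statements merged into one kernel-verified Lean document; each statement's English description precedes it below -/
import Mathlib

section
/- Let G be a group, A a G-graded associative unital ring, and M a G-graded A-module. If N is a graded A-submodule of M that admits a complement as an A-module (i.e., there is an A-submodule P of M with N ∩ P = 0 and N + P = M), then N admits a complement as a graded A-module (i.e., there is a graded A-submodule P' of M with N ∩ P' = 0 and N + P' = M). -/
/-- Graded Maschke: a graded submodule of a graded module over a graded ring which admits
an (ungraded) module complement admits a graded complement. -/
theorem stmt0 {G : Type*} [Group G] [DecidableEq G] {A : Type*} [Ring A]
    {M : Type*} [AddCommGroup M] [Module A M]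
    (𝒜 : G → AddSubgroup A) [DirectSum.Decomposition 𝒜]
    (hA : ∀ g h : G, ∀ a ∈ 𝒜 g, ∀ b ∈ 𝒜 h, a * b ∈ 𝒜 (g * h))
    (ℳ : G → AddSubgroup M) [DirectSum.Decomposition ℳ]
    (hM : ∀ g h : G, ∀ a ∈ 𝒜 g, ∀ x ∈ ℳ h, a • x ∈ ℳ (g * h))
    (N : Submodule A M)
    (hN : ∀ x ∈ N, ∀ g : G, ((DirectSum.decompose ℳ x g : ℳ g) : M) ∈ N)
    (hcompl : ∃ P : Submodule A M, N ⊓ P = ⊥ ∧ N ⊔ P = ⊤) :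
    ∃ P' : Submodule A M,
      (∀ x ∈ P', ∀ g : G, ((DirectSum.decompose ℳ x g : ℳ g) : M) ∈ P') ∧
      N ⊓ P' = ⊥ ∧ N ⊔ P' = ⊤ := by
  classical
  obtain ⟨P, hdis, hcod⟩ := hcompl
  have hiscompl : IsCompl N P := ⟨disjoint_iff.mpr hdis, codisjoint_iff.mpr hcod⟩
  set π : M →ₗ[A] M := N.subtype ∘ₗ (N.projectionOnto P hiscompl) with hπ
  have hπ_mem : ∀ m, π m ∈ N := fun m => (N.projectionOnto P hiscompl m).2
  have hπ_fix : ∀ n ∈ N, π n = n := by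
    intro n hn
    simp only [hπ, LinearMap.comp_apply, Submodule.subtype_apply]
    rw [show n = ((⟨n, hn⟩ : N) : M) from rfl,
      Submodule.projectionOnto_apply_left hiscompl]
  -- the degree-preserving averaging of π
  let φ : ∀ g : G, ℳ g →+ M := fun g =>
    { toFun := fun x => (DirectSum.decompose ℳ (π (x : M)) g : M)
      map_zero' := by simp
      map_add' := fun x y => by
        simp only [AddSubgroup.coe_add, map_add, DirectSum.decompose_add,
          DirectSum.add_apply] }
  let f : M →+ M :=
    (DirectSum.toAddMonoid φ).comp (DirectSum.decomposeAddEquiv ℳ).toAddMonoidHom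
  have f_hom : ∀ (g : G) (x : M), x ∈ ℳ g →
      f x = (DirectSum.decompose ℳ (π x) g : M) := by
    intro g x hx
    show DirectSum.toAddMonoid φ (DirectSum.decompose ℳ x) = _
    rw [DirectSum.decompose_of_mem ℳ hx, DirectSum.toAddMonoid_of]
    rfl
  -- image of f lies in N
  have f_mem : ∀ m, f m ∈ N := by
    intro m
    induction m using DirectSum.Decomposition.inductionOn ℳ with
    | zero => simp
    | @homogeneous g x =>
      rw [f_hom g x x.2]
      exact hN _ (hπ_mem x) g
    | add m m' hm hm' => rw [map_add]; exact N.add_mem hm hm'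
  -- f fixes N
  have f_fix : ∀ n ∈ N, f n = n := by
    intro n hn
    conv_rhs => rw [← DirectSum.sum_support_decompose ℳ n]
    conv_lhs => rw [← DirectSum.sum_support_decompose ℳ n]
    rw [map_sum]
    refine Finset.sum_congr rfl fun g _ => ?_
    rw [f_hom g _ (DirectSum.decompose ℳ n g).2,
      hπ_fix _ (hN n hn g), DirectSum.decompose_coe, DirectSum.of_eq_same]
  -- key: decomposing a homogeneous scalar multiple
  have key : ∀ (h : G) (a : A), a ∈ 𝒜 h → ∀ (g : G) (x : M),
      (DirectSum.decompose ℳ (a • x) (h * g) : M) = a • (DirectSum.decompose ℳ x g : M) := by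
    intro h a ha g x
    induction x using DirectSum.Decomposition.inductionOn ℳ with
    | zero => simp
    | @homogeneous k y =>
      have hy : a • (y : M) ∈ ℳ (h * k) := hM h k a ha y y.2
      by_cases hkg : k = g
      · subst hkg
        rw [DirectSum.decompose_of_mem_same ℳ hy, DirectSum.decompose_coe,
          DirectSum.of_eq_same]
      · rw [DirectSum.decompose_of_mem_ne ℳ hy (by simpa using hkg),
          DirectSum.decompose_coe, DirectSum.of_eq_of_ne _ _ _ (Ne.symm hkg)]
        simp
    | add m m' hm hm' =>
      rw [smul_add, DirectSum.decompose_add, DirectSum.decompose_add,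
        DirectSum.add_apply, DirectSum.add_apply]
      push_cast
      rw [hm, hm', smul_add]
  -- f is A-linear
  have f_smul : ∀ (a : A) (m : M), f (a • m) = a • f m := by
    have hhom : ∀ (h : G) (a : A), a ∈ 𝒜 h → ∀ m, f (a • m) = a • f m := by
      intro h a ha m
      induction m using DirectSum.Decomposition.inductionOn ℳ with
      | zero => simp
      | @homogeneous g x =>
        have hax : a • (x : M) ∈ ℳ (h * g) := hM h g a ha x x.2
        rw [f_hom _ _ hax, f_hom g x x.2, map_smul, key h a ha g (π x)]
      | add m m' hm hm' => rw [smul_add, map_add, hm, hm', map_add, smul_add]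
    intro a m
    induction a using DirectSum.Decomposition.inductionOn 𝒜 with
    | zero => simp
    | @homogeneous h b => exact hhom h b b.2 m
    | add b b' hb hb' => rw [add_smul, map_add, hb, hb', add_smul]
  let F : M →ₗ[A] M :=
    { toFun := f, map_add' := map_add f, map_smul' := f_smul }
  -- f commutes with taking components
  have f_comp : ∀ (x : M) (g : G),
      (DirectSum.decompose ℳ (f x) g : M) = f (DirectSum.decompose ℳ x g : M) := by
    intro x g
    induction x using DirectSum.Decomposition.inductionOn ℳ with
    | zero => simp
    | @homogeneous k y =>
      have hfy : f (y : M) ∈ ℳ k := by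
        rw [f_hom k y y.2]; exact (DirectSum.decompose ℳ (π y) k).2
      by_cases hkg : k = g
      · subst hkg
        rw [DirectSum.decompose_of_mem_same ℳ hfy, DirectSum.decompose_coe,
          DirectSum.of_eq_same]
      · rw [DirectSum.decompose_of_mem_ne ℳ hfy hkg, DirectSum.decompose_coe,
          DirectSum.of_eq_of_ne _ _ _ (Ne.symm hkg)]
        simp
    | add m m' hm hm' =>
      rw [map_add, DirectSum.decompose_add, DirectSum.decompose_add,
        DirectSum.add_apply, DirectSum.add_apply]
      push_cast
      rw [hm, hm', map_add]
  refine ⟨LinearMap.ker F, ?_, ?_, ?_⟩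
  · intro x hx g
    have : f x = 0 := hx
    show f _ = 0
    rw [← f_comp, this]
    simp
  · rw [eq_bot_iff]
    intro x hx
    obtain ⟨hxN, hxK⟩ := Submodule.mem_inf.mp hx
    have h0 : f x = 0 := hxK
    have hx0 : x = 0 := by rw [← f_fix x hxN]; exact h0
    simpa using hx0
  · rw [eq_top_iff]
    intro m _
    have h1 : f m ∈ N := f_mem m
    have h2 : m - f m ∈ LinearMap.ker F := by
      show f (m - f m) = 0
      rw [map_sub, f_fix _ h1, sub_self]
    have : m = f m + (m - f m) := by abel
    rw [this]
    exact Submodule.add_mem_sup h1 h2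
end

section
/- Let R be a commutative ring, M an R-module, Q a quadratic form on M, and u, v ∈ M a hyperbolic pair. Then for every unit α of R: s_α * ι(u) = α • ι(u), ι(u) * s_α = α⁻¹ • ι(u), s_α * ι(v) = α⁻¹ • ι(v), and ι(v) * s_α = α • ι(v). -/
/-- For a hyperbolic pair `u, v` and a unit `α`, the element
`s_α = α • (ι u * ι v) + α⁻¹ • (ι v * ι u)` of the Clifford algebra. -/
def sElem {R M : Type*} [CommRing R] [AddCommGroup M] [Module R M]
    (Q : QuadraticForm R M) (u v : M) (α : Rˣ) : CliffordAlgebra Q :=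
  (α : R) • (CliffordAlgebra.ι Q u * CliffordAlgebra.ι Q v)
    + ((α⁻¹ : Rˣ) : R) • (CliffordAlgebra.ι Q v * CliffordAlgebra.ι Q u)

/-- `s_α` rescales the vectors of a hyperbolic pair: `s_α u = α u`, `u s_α = α⁻¹ u`,
`s_α v = α⁻¹ v`, `v s_α = α v`. -/
theorem stmt7 {R M : Type*} [CommRing R] [AddCommGroup M] [Module R M]
    (Q : QuadraticForm R M) (u v : M)
    (hu : Q u = 0) (hv : Q v = 0) (huv : QuadraticMap.polar Q u v = 1) (α : Rˣ) :
    sElem Q u v α * CliffordAlgebra.ι Q u = (α : R) • CliffordAlgebra.ι Q u ∧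
    CliffordAlgebra.ι Q u * sElem Q u v α = ((α⁻¹ : Rˣ) : R) • CliffordAlgebra.ι Q u ∧
    sElem Q u v α * CliffordAlgebra.ι Q v = ((α⁻¹ : Rˣ) : R) • CliffordAlgebra.ι Q v ∧
    CliffordAlgebra.ι Q v * sElem Q u v α = (α : R) • CliffordAlgebra.ι Q v := by
  have hx : CliffordAlgebra.ι Q u * CliffordAlgebra.ι Q u = 0 := by
    rw [CliffordAlgebra.ι_sq_scalar, hu, map_zero]
  have hy : CliffordAlgebra.ι Q v * CliffordAlgebra.ι Q v = 0 := by
    rw [CliffordAlgebra.ι_sq_scalar, hv, map_zero]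
  have hyx : CliffordAlgebra.ι Q v * CliffordAlgebra.ι Q u
      = 1 - CliffordAlgebra.ι Q u * CliffordAlgebra.ι Q v := by
    rw [eq_sub_iff_add_eq, add_comm, CliffordAlgebra.ι_mul_ι_add_swap, huv, map_one]
  set x := CliffordAlgebra.ι Q u with hxdef
  set y := CliffordAlgebra.ι Q v with hydef
  have h1 : x * (y * x) = x := by
    rw [hyx, mul_sub, mul_one, ← mul_assoc, hx, zero_mul, sub_zero]
  have h2 : y * (x * y) = y := by
    rw [← mul_assoc, hyx, sub_mul, one_mul, mul_assoc, hy, mul_zero, sub_zero]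
  have h3 : x * (x * y) = 0 := by rw [← mul_assoc, hx, zero_mul]
  have h4 : y * (y * x) = 0 := by rw [← mul_assoc, hy, zero_mul]
  have h5 : y * (x * x) = 0 := by rw [hx, mul_zero]
  have h6 : x * (y * y) = 0 := by rw [hy, mul_zero]
  unfold sElem
  rw [← hxdef, ← hydef]
  refine ⟨?_, ?_, ?_, ?_⟩ <;>
    simp only [add_mul, mul_add, smul_mul_assoc, mul_smul_comm, mul_assoc,
      h1, h2, h3, h4, h5, h6, smul_zero, zero_add, add_zero]
end

section
/- Let R be a commutative ring, M an R-module, Q a quadratic form on M, and u, v ∈ M a hyperbolic pair. Then for all units α, β of R: s_α * s_β = s_{αβ}; in particular s_α * s_{α⁻¹} = 1 = s_{α⁻¹} * s_α, so s_α is invertible with inverse s_{α⁻¹}. Moreover, reverse(s_α) = s_{α⁻¹}, where reverse is the canonical anti-automorphism of CliffordAlgebra Q fixing all ι(m); hence s_α * reverse(s_α) = 1. -/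
/-- `s_α * s_β = s_{αβ}`, `s_α` is invertible with inverse `s_{α⁻¹}`, and
`reverse s_α = s_{α⁻¹}`, so `s_α * reverse s_α = 1`. -/
theorem stmt8 {R M : Type*} [CommRing R] [AddCommGroup M] [Module R M]
    (Q : QuadraticForm R M) (u v : M)
    (hu : Q u = 0) (hv : Q v = 0) (huv : QuadraticMap.polar Q u v = 1) :
    (∀ α β : Rˣ, sElem Q u v α * sElem Q u v β = sElem Q u v (α * β)) ∧
    (∀ α : Rˣ, sElem Q u v α * sElem Q u v α⁻¹ = 1 ∧ sElem Q u v α⁻¹ * sElem Q u v α = 1) ∧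
    (∀ α : Rˣ, CliffordAlgebra.reverse (Q := Q) (sElem Q u v α) = sElem Q u v α⁻¹) ∧
    (∀ α : Rˣ, sElem Q u v α * CliffordAlgebra.reverse (Q := Q) (sElem Q u v α) = 1) := by
  set e := CliffordAlgebra.ι Q u * CliffordAlgebra.ι Q v with he
  set f := CliffordAlgebra.ι Q v * CliffordAlgebra.ι Q u with hf
  have hu2 : CliffordAlgebra.ι Q u * CliffordAlgebra.ι Q u = 0 := by
    rw [CliffordAlgebra.ι_sq_scalar, hu, map_zero]
  have hv2 : CliffordAlgebra.ι Q v * CliffordAlgebra.ι Q v = 0 := by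
    rw [CliffordAlgebra.ι_sq_scalar, hv, map_zero]
  have hef : e + f = 1 := by
    rw [he, hf, CliffordAlgebra.ι_mul_ι_add_swap, huv, map_one]
  have hef0 : e * f = 0 := by
    rw [he, hf, mul_assoc, ← mul_assoc (CliffordAlgebra.ι Q v), hv2, zero_mul, mul_zero]
  have hfe0 : f * e = 0 := by
    rw [he, hf, mul_assoc, ← mul_assoc (CliffordAlgebra.ι Q u), hu2, zero_mul, mul_zero]
  have hee : e * e = e := by
    have : e * (e + f) = e := by rw [hef, mul_one]
    rwa [mul_add, hef0, add_zero] at this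
  have hff : f * f = f := by
    have : f * (e + f) = f := by rw [hef, mul_one]
    rwa [mul_add, hfe0, zero_add] at this
  have hmul : ∀ α β : Rˣ, sElem Q u v α * sElem Q u v β = sElem Q u v (α * β) := by
    intro α β
    simp only [sElem, ← he, ← hf, mul_add, add_mul, smul_mul_assoc, mul_smul_comm,
      hee, hff, hef0, hfe0, smul_zero, add_zero, zero_add, smul_smul, mul_inv, Units.val_mul]
    ring_nf
  have hone : sElem Q u v 1 = 1 := by
    simp only [sElem, ← he, ← hf, inv_one, Units.val_one, one_smul, hef]
  have hinv : ∀ α : Rˣ, sElem Q u v α * sElem Q u v α⁻¹ = 1 ∧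
      sElem Q u v α⁻¹ * sElem Q u v α = 1 := by
    intro α
    constructor
    · rw [hmul, mul_inv_cancel, hone]
    · rw [hmul, inv_mul_cancel, hone]
  have hrev : ∀ α : Rˣ, CliffordAlgebra.reverse (Q := Q) (sElem Q u v α) = sElem Q u v α⁻¹ := by
    intro α
    have h1 : CliffordAlgebra.reverse (Q := Q) e = f := by
      rw [he, hf, CliffordAlgebra.reverse.map_mul, CliffordAlgebra.reverse_ι,
        CliffordAlgebra.reverse_ι]
    have h2 : CliffordAlgebra.reverse (Q := Q) f = e := by
      rw [he, hf, CliffordAlgebra.reverse.map_mul, CliffordAlgebra.reverse_ι,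
        CliffordAlgebra.reverse_ι]
    simp only [sElem, ← he, ← hf, map_add, LinearMap.map_smul, h1, h2, inv_inv]
    rw [add_comm]
  refine ⟨hmul, hinv, hrev, fun α => ?_⟩
  rw [hrev, (hinv α).1]
end

section
/- Let R be a commutative ring, M an R-module, Q a quadratic form on M, and u, v ∈ M a hyperbolic pair. Then for every unit α of R: s_α = ι(α•u + α⁻¹•v) * ι(u + v), where both factors are square roots of 1 in CliffordAlgebra Q (since Q(α•u + α⁻¹•v) = 1 and Q(u+v) = 1); and s_α is an element of the spin group of Q (i.e., s_α lies in the Lipschitz group — the subgroup of units generated by the invertible elements ι(m), m ∈ M — is even, and satisfies the unitarity condition star(s_α) * s_α = 1). -/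
open CliffordAlgebra in
/-- `s_α = ι(α•u + α⁻¹•v) * ι(u + v)`, both factors square to `1`, and `s_α` belongs to the
spin group of `Q`. -/
theorem stmt10 {R M : Type*} [CommRing R] [AddCommGroup M] [Module R M]
    (Q : QuadraticForm R M) (u v : M)
    (hu : Q u = 0) (hv : Q v = 0) (huv : QuadraticMap.polar Q u v = 1) (α : Rˣ) :
    sElem Q u v α
      = CliffordAlgebra.ι Q ((α : R) • u + ((α⁻¹ : Rˣ) : R) • v)
          * CliffordAlgebra.ι Q (u + v) ∧
    CliffordAlgebra.ι Q ((α : R) • u + ((α⁻¹ : Rˣ) : R) • v)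
        * CliffordAlgebra.ι Q ((α : R) • u + ((α⁻¹ : Rˣ) : R) • v) = 1 ∧
    CliffordAlgebra.ι Q (u + v) * CliffordAlgebra.ι Q (u + v) = 1 ∧
    sElem Q u v α ∈ spinGroup Q := by
  set w : M := (α : R) • u + ((α⁻¹ : Rˣ) : R) • v with hw
  have hQw : Q w = 1 := by
    rw [hw, QuadraticMap.map_add (⇑Q) ((α : R) • u) (((α⁻¹ : Rˣ) : R) • v), QuadraticMap.map_smul, QuadraticMap.map_smul,
      QuadraticMap.polar_smul_left, QuadraticMap.polar_smul_right, huv, hu, hv]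
    simp [smul_eq_mul]
  have hQuv : Q (u + v) = 1 := by
    rw [QuadraticMap.map_add (⇑Q) u v, hu, hv, huv]; ring
  have hι2w : ι Q w * ι Q w = 1 := by rw [ι_sq_scalar, hQw, map_one]
  have hι2uv : ι Q (u + v) * ι Q (u + v) = 1 := by rw [ι_sq_scalar, hQuv, map_one]
  have hιu : ι Q u * ι Q u = 0 := by rw [ι_sq_scalar, hu, map_zero]
  have hιv : ι Q v * ι Q v = 0 := by rw [ι_sq_scalar, hv, map_zero]
  have heq : sElem Q u v α = ι Q w * ι Q (u + v) := by
    rw [hw, map_add, map_add, map_smul, map_smul, sElem]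
    rw [add_mul, smul_mul_assoc, smul_mul_assoc, mul_add, mul_add, hιu, hιv]
    rw [smul_add, smul_add, smul_zero, smul_zero]
    abel
  refine ⟨heq, hι2w, hι2uv, ?_⟩
  -- spin group membership
  have hstar : star (sElem Q u v α) = ι Q (u + v) * ι Q w := by
    rw [heq, star_mul, star_ι, star_ι, neg_mul_neg]
  have h1 : star (sElem Q u v α) * sElem Q u v α = 1 := by
    rw [hstar, heq, mul_assoc, ← mul_assoc (ι Q w), hι2w, one_mul, hι2uv]
  have h2 : sElem Q u v α * star (sElem Q u v α) = 1 := by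
    rw [hstar, heq, mul_assoc, ← mul_assoc (ι Q (u + v)), hι2uv, one_mul, hι2w]
  refine ⟨⟨?_, h1, h2⟩, ?_⟩
  · -- lipschitz group
    refine ⟨⟨ι Q w, ι Q w, hι2w, hι2w⟩ * ⟨ι Q (u + v), ι Q (u + v), hι2uv, hι2uv⟩, ?_, ?_⟩
    · exact mul_mem (Subgroup.subset_closure ⟨w, rfl⟩)
        (Subgroup.subset_closure ⟨u + v, rfl⟩)
    · simp [heq]
  · -- even
    rw [heq]
    exact ι_mul_ι_mem_evenOdd_zero Q w (u + v)
end

section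
/- Fix m ≥ 1 and integers q, s ≥ 0, and set k := q + 2s and n := k·2^m. Let t, t_1, …, t_q be pairs in {0,1}^m × {0,1}^m with each X_{t_i} a symmetric matrix, and let Φ be the block-diagonal n×n matrix diag(X_{t_1}, …, X_{t_q}, H, …, H) with s blocks H := [[0, I],[I, 0]] (I the 2^m×2^m identity matrix). Let λ_1, …, λ_k ∈ Fˣ and u := diag(λ_1, …, λ_k) ⊗ X_t (Kronecker product, an n×n matrix). If μ ∈ Fˣ satisfies λ_i² · β(t, t_i) = μ for i = 1, …, q and λ_{q+2j−1} · λ_{q+2j} = μ for j = 1, …, s, then transpose(u) · Φ · u = μ · Φ. -/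
open Matrix

/-- The 2×2 matrix `diag(-1, 1)`. -/
def Amat (F : Type*) [Field F] : Matrix (Fin 2) (Fin 2) F := !![-1, 0; 0, 1]

/-- The 2×2 matrix interchanging the basis vectors. -/
def Bmat (F : Type*) [Field F] : Matrix (Fin 2) (Fin 2) F := !![0, 1; 1, 0]

/-- The generator `X_t` of the standard realization of the graded division algebra,
for `t = (x, y)`: the iterated Kronecker product of the matrices `A^{x_j} * B₀^{y_j}`. -/
def Xmat (F : Type*) [Field F] (m : ℕ) (x y : Fin m → ZMod 2) :
    Matrix (Fin m → Fin 2) (Fin m → Fin 2) F :=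
  Matrix.of fun i k => ∏ j, (Amat F ^ (x j).val * Bmat F ^ (y j).val) (i j) (k j)

/-- The bicharacter value `β(t, t') = (-1)^{Σ_j (x_j y'_j + y_j x'_j)}`. -/
def betaSign (F : Type*) [Field F] {m : ℕ}
    (t t' : (Fin m → ZMod 2) × (Fin m → ZMod 2)) : F :=
  (-1 : F) ^ (∑ j, (t.1 j * t'.2 j + t.2 j * t'.1 j) : ZMod 2).val

/-- The block-diagonal matrix `Φ = diag(X_{t_1}, …, X_{t_q}, H, …, H)` with `s` hyperbolic
blocks `H = [[0, I], [I, 0]]`. -/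
def PhiMat (F : Type*) [Field F] (m q s : ℕ)
    (ts : Fin q → (Fin m → ZMod 2) × (Fin m → ZMod 2)) :
    Matrix ((Fin (q + 2 * s)) × (Fin m → Fin 2)) ((Fin (q + 2 * s)) × (Fin m → Fin 2)) F :=
  Matrix.of fun ip i'p' =>
    if h : (ip.1 : ℕ) < q then
      if (i'p'.1 : ℕ) = (ip.1 : ℕ) then
        Xmat F m (ts ⟨ip.1, h⟩).1 (ts ⟨ip.1, h⟩).2 ip.2 i'p'.2
      else 0
    else
      if ((i'p'.1 : ℕ) = if ((ip.1 : ℕ) - q) % 2 = 0 then (ip.1 : ℕ) + 1 else (ip.1 : ℕ) - 1)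
          ∧ i'p'.2 = ip.2 then 1 else 0

section Aux

variable {F : Type*} [Field F] {m : ℕ}

/-- Kronecker-pi construction. -/
def kronPi (m : ℕ) {F : Type*} [Field F] (M : Fin m → Matrix (Fin 2) (Fin 2) F) :
    Matrix (Fin m → Fin 2) (Fin m → Fin 2) F :=
  Matrix.of fun i k => ∏ j, M j (i j) (k j)

lemma kronPi_mul (M N : Fin m → Matrix (Fin 2) (Fin 2) F) :
    kronPi m M * kronPi m N = kronPi m (fun j => M j * N j) := by
  ext i k
  simp only [kronPi, Matrix.mul_apply, Matrix.of_apply]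
  rw [Finset.prod_univ_sum]
  rw [Fintype.piFinset_univ]
  exact Finset.sum_congr rfl fun l _ => (Finset.prod_mul_distrib).symm

lemma kronPi_transpose (M : Fin m → Matrix (Fin 2) (Fin 2) F) :
    (kronPi m M)ᵀ = kronPi m (fun j => (M j)ᵀ) := rfl

lemma kronPi_one : kronPi m (fun _ => (1 : Matrix (Fin 2) (Fin 2) F)) = 1 := by
  ext i k
  simp only [kronPi, Matrix.of_apply, Matrix.one_apply]
  by_cases h : i = k
  · subst h; simp
  · rw [if_neg h]
    obtain ⟨j, hj⟩ := Function.ne_iff.mp h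
    exact Finset.prod_eq_zero (Finset.mem_univ j) (by simp [hj])

lemma kronPi_smul (c : Fin m → F) (M : Fin m → Matrix (Fin 2) (Fin 2) F) :
    kronPi m (fun j => c j • M j) = (∏ j, c j) • kronPi m M := by
  ext i k
  simp [kronPi, Finset.prod_mul_distrib]

lemma zmod2_cases : ∀ a : ZMod 2, a = 0 ∨ a = 1 := by decide

lemma AT : (Amat F)ᵀ = Amat F := by
  ext i j; fin_cases i <;> fin_cases j <;> simp [Amat]

lemma BT : (Bmat F)ᵀ = Bmat F := by
  ext i j; fin_cases i <;> fin_cases j <;> simp [Bmat]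

lemma AA : Amat F * Amat F = 1 := by
  ext i j; fin_cases i <;> fin_cases j <;>
    simp [Amat, Matrix.mul_apply, Fin.sum_univ_two, Matrix.one_apply]

lemma BB : Bmat F * Bmat F = 1 := by
  ext i j; fin_cases i <;> fin_cases j <;>
    simp [Bmat, Matrix.mul_apply, Fin.sum_univ_two, Matrix.one_apply]

lemma BA : Bmat F * Amat F = -(Amat F * Bmat F) := by
  ext i j; fin_cases i <;> fin_cases j <;>
    simp [Amat, Bmat, Matrix.mul_apply, Fin.sum_univ_two]

lemma hAA (x : Matrix (Fin 2) (Fin 2) F) : Amat F * (Amat F * x) = x := by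
  rw [← mul_assoc, AA, one_mul]
lemma hBB (x : Matrix (Fin 2) (Fin 2) F) : Bmat F * (Bmat F * x) = x := by
  rw [← mul_assoc, BB, one_mul]
lemma hBA (x : Matrix (Fin 2) (Fin 2) F) :
    Bmat F * (Amat F * x) = -(Amat F * (Bmat F * x)) := by
  rw [← mul_assoc, BA, neg_mul, mul_assoc]

lemma two_orth (a b : ZMod 2) :
    (Amat F ^ a.val * Bmat F ^ b.val)ᵀ * (Amat F ^ a.val * Bmat F ^ b.val) = 1 := by
  rcases zmod2_cases a with rfl | rfl <;> rcases zmod2_cases b with rfl | rfl <;>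
    simp [ZMod.val_zero, ZMod.val_one, transpose_mul, AT, BT, mul_assoc,
      hAA, hBB, AA, BB]

lemma two_conj (a b c d : ZMod 2) :
    (Amat F ^ a.val * Bmat F ^ b.val)ᵀ *
        ((Amat F ^ c.val * Bmat F ^ d.val) * (Amat F ^ a.val * Bmat F ^ b.val)) =
      ((-1 : F) ^ (a * d + b * c).val) • (Amat F ^ c.val * Bmat F ^ d.val) := by
  have h2 : (1 + 1 : ZMod 2) = 0 := by decide
  rcases zmod2_cases a with rfl | rfl <;> rcases zmod2_cases b with rfl | rfl <;>
    rcases zmod2_cases c with rfl | rfl <;> rcases zmod2_cases d with rfl | rfl <;>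
    simp [h2, ZMod.val_zero, ZMod.val_one, transpose_mul, AT, BT, mul_assoc,
      hAA, hBB, hBA, AA, BB, BA, mul_neg, neg_mul, neg_neg, neg_smul, one_smul]

lemma Xmat_eq_kron (x y : Fin m → ZMod 2) :
    Xmat F m x y = kronPi m (fun j => Amat F ^ (x j).val * Bmat F ^ (y j).val) := rfl

lemma neg_pow_val_add (a b : ZMod 2) : (-1 : F) ^ (a + b).val = (-1) ^ a.val * (-1) ^ b.val := by
  rcases zmod2_cases a with rfl | rfl <;> rcases zmod2_cases b with rfl | rfl <;>
    norm_num [(by decide : (1 + 1 : ZMod 2) = 0), (by decide : ZMod.val (2 : ZMod 2) = 0),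
      (by decide : ZMod.val (1 : ZMod 2) = 1)]

lemma prod_neg_pow (g : Fin m → ZMod 2) :
    ∏ j, (-1 : F) ^ (g j).val = (-1 : F) ^ (∑ j, g j).val := by
  classical
  induction (Finset.univ : Finset (Fin m)) using Finset.cons_induction with
  | empty => simp
  | cons a s ha ih => rw [Finset.prod_cons, Finset.sum_cons, neg_pow_val_add, ih]

lemma X_orth (x y : Fin m → ZMod 2) : (Xmat F m x y)ᵀ * Xmat F m x y = 1 := by
  rw [Xmat_eq_kron, kronPi_transpose, kronPi_mul]
  rw [show (fun j => (Amat F ^ (x j).val * Bmat F ^ (y j).val)ᵀ *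
    (Amat F ^ (x j).val * Bmat F ^ (y j).val)) = fun _ => 1 from funext fun j => two_orth _ _]
  exact kronPi_one

lemma X_conj (x y x' y' : Fin m → ZMod 2) :
    (Xmat F m x y)ᵀ * (Xmat F m x' y' * Xmat F m x y) =
      betaSign F (x, y) (x', y') • Xmat F m x' y' := by
  rw [Xmat_eq_kron x y, Xmat_eq_kron x' y', kronPi_transpose, kronPi_mul, kronPi_mul]
  have h : (fun j => (Amat F ^ (x j).val * Bmat F ^ (y j).val)ᵀ *
      ((Amat F ^ (x' j).val * Bmat F ^ (y' j).val) * (Amat F ^ (x j).val * Bmat F ^ (y j).val)))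
      = fun j => ((-1 : F) ^ (x j * y' j + y j * x' j).val) •
        (Amat F ^ (x' j).val * Bmat F ^ (y' j).val) := funext fun j => two_conj _ _ _ _
  rw [h, kronPi_smul, prod_neg_pow]
  rfl

lemma conj_entry (k : ℕ) (lf : Fin k → F) (K : Matrix (Fin m → Fin 2) (Fin m → Fin 2) F)
    (Φ : Matrix (Fin k × (Fin m → Fin 2)) (Fin k × (Fin m → Fin 2)) F)
    (i i' : Fin k) (p p' : Fin m → Fin 2) :
    ((Matrix.kroneckerMap (· * ·) (Matrix.diagonal lf) K)ᵀ * Φ *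
        Matrix.kroneckerMap (· * ·) (Matrix.diagonal lf) K) (i, p) (i', p') =
      lf i * lf i' * ∑ b, ∑ d, K b p * Φ (i, b) (i', d) * K d p' := by
  simp only [Matrix.mul_apply, Matrix.transpose_apply, Matrix.kroneckerMap_apply,
    Matrix.diagonal_apply, Fintype.sum_prod_type, ite_mul, zero_mul, mul_ite, mul_zero,
    Finset.sum_ite_irrel, Finset.sum_const_zero, Finset.sum_ite_eq, Finset.sum_ite_eq',
    Finset.mem_univ, if_true, Finset.sum_mul, Finset.mul_sum]
  rw [Finset.sum_comm]
  apply Finset.sum_congr rfl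
  intro b _
  apply Finset.sum_congr rfl
  intro d _
  ring

end Aux

theorem stmt12 {F : Type*} [Field F] (hF : (2 : F) ≠ 0) (m : ℕ) (hm : 1 ≤ m) (q s : ℕ)
    (t : (Fin m → ZMod 2) × (Fin m → ZMod 2))
    (ts : Fin q → (Fin m → ZMod 2) × (Fin m → ZMod 2))
    (hsymm : ∀ i : Fin q, (Xmat F m (ts i).1 (ts i).2)ᵀ = Xmat F m (ts i).1 (ts i).2)
    (lam : Fin (q + 2 * s) → Fˣ) (μ : Fˣ)
    (hμq : ∀ i : Fin q, ((lam (Fin.castAdd (2 * s) i) : F)) ^ 2 * betaSign F t (ts i) = (μ : F))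
    (hμs : ∀ j : Fin s,
      ((lam ⟨q + 2 * (j : ℕ), by have := j.isLt; omega⟩ : F))
        * ((lam ⟨q + 2 * (j : ℕ) + 1, by have := j.isLt; omega⟩ : F)) = (μ : F)) :
    (Matrix.kroneckerMap (· * ·) (Matrix.diagonal fun i => ((lam i : F))) (Xmat F m t.1 t.2))ᵀ
        * PhiMat F m q s ts
        * Matrix.kroneckerMap (· * ·) (Matrix.diagonal fun i => ((lam i : F))) (Xmat F m t.1 t.2)
      = (μ : F) • PhiMat F m q s ts := by
  ext ⟨i, p⟩ ⟨i', p'⟩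
  set K := Xmat F m t.1 t.2 with hK
  rw [conj_entry]
  rw [Matrix.smul_apply, smul_eq_mul]
  by_cases hi : (i : ℕ) < q
  · -- diagonal block case
    by_cases hii : (i' : ℕ) = (i : ℕ)
    · have hPhi : ∀ b d, PhiMat F m q s ts (i, b) (i', d) =
          Xmat F m (ts ⟨i, hi⟩).1 (ts ⟨i, hi⟩).2 b d := by
        intro b d
        simp only [PhiMat, Matrix.of_apply]
        rw [dif_pos hi, if_pos hii]
      have hsum : ∑ b, ∑ d, K b p * PhiMat F m q s ts (i, b) (i', d) * K d p' =
          (Kᵀ * (Xmat F m (ts ⟨i, hi⟩).1 (ts ⟨i, hi⟩).2 * K)) p p' := by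
        simp only [hPhi, Matrix.mul_apply, Matrix.transpose_apply, Finset.mul_sum]
        apply Finset.sum_congr rfl
        intro b _
        apply Finset.sum_congr rfl
        intro d _
        ring
      rw [hsum, hK, X_conj, Matrix.smul_apply, smul_eq_mul]
      have hie : i' = i := Fin.ext hii
      have hlam : (lam i' : F) = (lam i : F) := by rw [hie]
      have hmu := hμq ⟨i, hi⟩
      have hcast : Fin.castAdd (2 * s) (⟨(i : ℕ), hi⟩ : Fin q) = i := Fin.ext rfl
      rw [hcast] at hmu
      have hbeta : betaSign F (t.1, t.2) ((ts ⟨i, hi⟩).1, (ts ⟨i, hi⟩).2) =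
          betaSign F t (ts ⟨i, hi⟩) := by rfl
      rw [hbeta]
      have hPhi' : PhiMat F m q s ts (i, p) (i', p') =
          Xmat F m (ts ⟨i, hi⟩).1 (ts ⟨i, hi⟩).2 p p' := hPhi p p'
      rw [hPhi', hlam, ← hmu]
      ring
    · have hPhi : ∀ b d, PhiMat F m q s ts (i, b) (i', d) = 0 := by
        intro b d
        simp only [PhiMat, Matrix.of_apply]
        rw [dif_pos hi, if_neg hii]
      have hPhi' : PhiMat F m q s ts (i, p) (i', p') = 0 := by
        simp only [PhiMat, Matrix.of_apply]
        rw [dif_pos hi, if_neg hii]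
      simp [hPhi, hPhi']
  · -- hyperbolic block case
    set pr : ℕ := if ((i : ℕ) - q) % 2 = 0 then (i : ℕ) + 1 else (i : ℕ) - 1 with hpr
    have hPhi : ∀ b d, PhiMat F m q s ts (i, b) (i', d) =
        if ((i' : ℕ) = pr) ∧ d = b then 1 else 0 := by
      intro b d
      simp only [PhiMat, Matrix.of_apply]
      rw [dif_neg hi]
    have hPhi' : PhiMat F m q s ts (i, p) (i', p') =
        if ((i' : ℕ) = pr) ∧ p' = p then 1 else 0 := by
      simp only [PhiMat, Matrix.of_apply]
      rw [dif_neg hi]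
    rw [hPhi']
    by_cases hii : (i' : ℕ) = pr
    · have hsum : ∑ b, ∑ d, K b p * PhiMat F m q s ts (i, b) (i', d) * K d p' =
          (Kᵀ * K) p p' := by
        simp only [hPhi, hii, true_and, Matrix.mul_apply, Matrix.transpose_apply,
          mul_ite, mul_one, mul_zero, ite_mul, zero_mul]
        apply Finset.sum_congr rfl
        intro b _
        simp
      rw [hsum, hK, X_orth, Matrix.one_apply]
      -- now need lam i * lam i' = μ
      have hlam : (lam i : F) * (lam i' : F) = (μ : F) := by
        have hiq : q ≤ (i : ℕ) := le_of_not_gt hi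
        have hilt : (i : ℕ) < q + 2 * s := i.isLt
        by_cases hpar : ((i : ℕ) - q) % 2 = 0
        · set j : ℕ := ((i : ℕ) - q) / 2 with hj
          have hjs : j < s := by omega
          have hi1 : (i : ℕ) = q + 2 * j := by omega
          have hi'1 : (i' : ℕ) = q + 2 * j + 1 := by
            rw [hii, hpr]; rw [if_pos hpar]; omega
          have := hμs ⟨j, hjs⟩
          have e1 : (⟨q + 2 * j, by omega⟩ : Fin (q + 2 * s)) = i := Fin.ext (by simp [hi1])
          have e2 : (⟨q + 2 * j + 1, by omega⟩ : Fin (q + 2 * s)) = i' := Fin.ext (by simp [hi'1])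
          rwa [e1, e2] at this
        · set j : ℕ := ((i : ℕ) - q) / 2 with hj
          have hjs : j < s := by omega
          have hi1 : (i : ℕ) = q + 2 * j + 1 := by omega
          have hi'1 : (i' : ℕ) = q + 2 * j := by
            rw [hii, hpr]; rw [if_neg hpar]; omega
          have := hμs ⟨j, hjs⟩
          have e1 : (⟨q + 2 * j, by omega⟩ : Fin (q + 2 * s)) = i' := Fin.ext (by simp [hi'1])
          have e2 : (⟨q + 2 * j + 1, by omega⟩ : Fin (q + 2 * s)) = i := Fin.ext (by simp [hi1])
          rw [e1, e2] at this
          rw [mul_comm]; exact this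
      by_cases hp : p = p'
      · subst hp
        rw [if_pos rfl, if_pos ⟨hii, rfl⟩, mul_one, mul_one, hlam]
      · rw [if_neg hp, if_neg (by exact fun h => hp (h.2.symm)), mul_zero, mul_zero]
    · have hz : ∀ b d, PhiMat F m q s ts (i, b) (i', d) = 0 := by
        intro b d
        rw [hPhi]
        simp [hii]
      rw [if_neg (by exact fun h => hii h.1)]
      simp [hz]
end

section
/- Fix m = 1 and integers q, s ≥ 0, and set k := q + 2s. Let t, t_1, …, t_q ∈ {0,1} × {0,1}, let λ_1, …, λ_k ∈ Fˣ, and let u := diag(λ_1, …, λ_k) ⊗ X_t (a 2k×2k matrix). Suppose μ ∈ Fˣ satisfies λ_i² · β(t, t_i) = μ for i = 1, …, q and λ_{q+2j−1} · λ_{q+2j} = μ for j = 1, …, s. Then det(u) = μ^{k} · β(t, t_1 + ⋯ + t_q + k·c), where c := (1,1) and the sum t_1 + ⋯ + t_q + k·c is taken componentwise modulo 2. -/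
open Matrix

section helpersXYZ
variable {F : Type*} [Field F]

lemma chi_add' (u v : ZMod 2) : ((-1:F))^(u+v).val = (-1)^u.val * (-1)^v.val := by
  have h01 : ∀ w : ZMod 2, w = 0 ∨ w = 1 := by decide
  rcases h01 u with rfl | rfl <;> rcases h01 v with rfl | rfl <;>
    norm_num [show ((2:ZMod 2)).val = 0 from rfl, show ((1:ZMod 2)).val = 1 from rfl,
      show ((0:ZMod 2)).val = 0 from rfl, show ((1:ZMod 2)+1).val = 0 from rfl]

lemma chi_sum' {ι : Type*} (sfin : Finset ι) (g : ι → ZMod 2) :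
    ∏ i ∈ sfin, ((-1:F))^(g i).val = (-1)^(∑ i ∈ sfin, g i).val := by
  classical
  induction sfin using Finset.induction_on with
  | empty => simp
  | insert _ _ h ih => rw [Finset.prod_insert h, Finset.sum_insert h, chi_add', ih]

lemma chi_nat' (n : ℕ) (c : ZMod 2) : ((-1:F))^(((n:ZMod 2))*c).val = (((-1:F))^c.val)^n := by
  induction n with
  | zero => simp
  | succ k ih =>
      have : ((k+1 : ℕ) : ZMod 2) * c = (k : ZMod 2) * c + c := by push_cast; ring
      rw [this, chi_add', ih, pow_succ]

lemma chi_sq' (u : ZMod 2) : (((-1:F))^u.val)^2 = 1 := by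
  have h01 : ∀ w : ZMod 2, w = 0 ∨ w = 1 := by decide
  rcases h01 u with rfl | rfl <;> norm_num [show ((1:ZMod 2)).val = 1 from rfl]

lemma pairProd' (s : ℕ) (f : ℕ → F) (μ : F)
    (h : ∀ j < s, f (2*j) * f (2*j+1) = μ) :
    ∏ i ∈ Finset.range (2*s), f i = μ^s := by
  induction s with
  | zero => simp
  | succ k ih =>
      have h2 : 2*(k+1) = (2*k+1)+1 := by ring
      rw [h2, Finset.prod_range_succ, Finset.prod_range_succ,
        ih (fun j hj => h j (by omega)), mul_assoc, h k (by omega), pow_succ]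

lemma detX' (x y : Fin 1 → ZMod 2) :
    (Xmat F 1 x y).det = ((-1:F))^((x 0) + (y 0)).val := by
  have hX : Xmat F 1 x y =
      Matrix.reindex (Equiv.funUnique (Fin 1) (Fin 2)).symm (Equiv.funUnique (Fin 1) (Fin 2)).symm
        (Amat F ^ (x 0).val * Bmat F ^ (y 0).val) := by
    ext i k
    simp [Xmat, Matrix.reindex, Fin.prod_univ_one]
  rw [hX, Matrix.det_reindex_self, Matrix.det_mul, Matrix.det_pow, Matrix.det_pow,
    show (Amat F).det = -1 by simp [Amat, Matrix.det_fin_two_of],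
    show (Bmat F).det = -1 by simp [Bmat, Matrix.det_fin_two_of],
    chi_add']

lemma betaSign_eq (t t' : (Fin 1 → ZMod 2) × (Fin 1 → ZMod 2)) :
    betaSign F t t' = (-1:F)^((t.1 0 * t'.2 0 + t.2 0 * t'.1 0)).val := by
  rw [betaSign, Fin.sum_univ_one]

end helpersXYZ

/-- For `m = 1`, the determinant of `u = diag(λ_1, …, λ_k) ⊗ X_t` equals
`μ^k · β(t, t_1 + ⋯ + t_q + k·c)` where `c = (1,1)`. -/
theorem stmt14 {F : Type*} [Field F] (hF : (2 : F) ≠ 0) (q s : ℕ)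
    (t : (Fin 1 → ZMod 2) × (Fin 1 → ZMod 2))
    (ts : Fin q → (Fin 1 → ZMod 2) × (Fin 1 → ZMod 2))
    (lam : Fin (q + 2 * s) → Fˣ) (μ : Fˣ)
    (hμq : ∀ i : Fin q, ((lam (Fin.castAdd (2 * s) i) : F)) ^ 2 * betaSign F t (ts i) = (μ : F))
    (hμs : ∀ j : Fin s,
      ((lam ⟨q + 2 * (j : ℕ), by have := j.isLt; omega⟩ : F))
        * ((lam ⟨q + 2 * (j : ℕ) + 1, by have := j.isLt; omega⟩ : F)) = (μ : F)) :
    (Matrix.kroneckerMap (· * ·) (Matrix.diagonal fun i => ((lam i : F)))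
        (Xmat F 1 t.1 t.2)).det
      = (μ : F) ^ (q + 2 * s)
        * betaSign F t
            ((∑ i, (ts i).1) + fun _ => ((q + 2 * s : ℕ) : ZMod 2),
             (∑ i, (ts i).2) + fun _ => ((q + 2 * s : ℕ) : ZMod 2)) := by
  classical
  set a := t.1 0 with ha
  set b := t.2 0 with hb
  set S1 : ZMod 2 := ∑ i, (a * (ts i).2 0 + b * (ts i).1 0) with hS1
  -- determinant via Kronecker
  rw [show Matrix.kroneckerMap (α := F) (· * ·) = Matrix.kroneckerMap (· * ·) from rfl]
  rw [Matrix.det_kronecker, Matrix.det_diagonal, detX']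
  have hcard1 : Fintype.card (Fin 1 → Fin 2) = 2 := by simp
  have hcard2 : Fintype.card (Fin (q + 2 * s)) = q + 2 * s := by simp
  rw [hcard1, hcard2]
  -- square of the product of lambdas
  have hlam2 : ∀ i : Fin q,
      ((lam (Fin.castAdd (2 * s) i) : F)) ^ 2 = (μ : F) * betaSign F t (ts i) := by
    intro i
    have hb2 : betaSign F t (ts i) * betaSign F t (ts i) = 1 := by
      have := chi_sq' (F := F) (∑ j, (t.1 j * (ts i).2 j + t.2 j * (ts i).1 j))
      rw [betaSign, ← sq]; exact this
    calc ((lam (Fin.castAdd (2 * s) i) : F)) ^ 2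
        = ((lam (Fin.castAdd (2 * s) i) : F)) ^ 2
            * (betaSign F t (ts i) * betaSign F t (ts i)) := by rw [hb2, mul_one]
      _ = (((lam (Fin.castAdd (2 * s) i) : F)) ^ 2 * betaSign F t (ts i))
            * betaSign F t (ts i) := by ring
      _ = (μ : F) * betaSign F t (ts i) := by rw [hμq i]
  have hpart1 : (∏ i : Fin q, ((lam (Fin.castAdd (2 * s) i) : F)) ^ 2)
      = (μ : F) ^ q * (-1 : F) ^ S1.val := by
    rw [Finset.prod_congr rfl (fun i _ => hlam2 i), Finset.prod_mul_distrib,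
      Finset.prod_const, Finset.card_univ, Fintype.card_fin]
    congr 1
    rw [Finset.prod_congr rfl (fun i _ => betaSign_eq (F := F) t (ts i)), chi_sum']
  -- the 2s part
  set f : ℕ → F := fun n => if hn : q + n < q + 2 * s then (lam ⟨q + n, hn⟩ : F) else 1 with hf
  have hpart2 : (∏ i : Fin (2 * s), ((lam (Fin.natAdd q i) : F))) = (μ : F) ^ s := by
    have heq : (∏ i : Fin (2 * s), ((lam (Fin.natAdd q i) : F))) = ∏ i : Fin (2 * s), f i := by
      refine Finset.prod_congr rfl fun i _ => ?_
      have hi : q + (i : ℕ) < q + 2 * s := by omega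
      simp only [hf, dif_pos hi]
      rfl
    rw [heq, Fin.prod_univ_eq_prod_range]
    refine pairProd' s f (μ : F) fun j hj => ?_
    simp only [hf]
    rw [dif_pos (by omega : q + 2 * j < q + 2 * s),
      dif_pos (by omega : q + (2 * j + 1) < q + 2 * s)]
    exact hμs ⟨j, hj⟩
  -- assemble the LHS
  have hsplit : ((∏ i, (lam i : F)) ^ 2)
      = (μ : F) ^ q * (-1 : F) ^ S1.val * ((μ : F) ^ s) ^ 2 := by
    rw [← Finset.prod_pow, Fin.prod_univ_add (f := fun i => (lam i : F) ^ 2), hpart1]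
    congr 1
    rw [Finset.prod_pow, hpart2]
  -- compute the RHS betaSign
  have hRHS : betaSign F t
      ((∑ i, (ts i).1) + fun _ => ((q + 2 * s : ℕ) : ZMod 2),
       (∑ i, (ts i).2) + fun _ => ((q + 2 * s : ℕ) : ZMod 2))
      = (-1 : F) ^ S1.val * ((-1 : F) ^ (a + b).val) ^ (q + 2 * s) := by
    rw [betaSign_eq]
    simp only [Pi.add_apply, Finset.sum_apply]
    have harg : (a * ((∑ i, (ts i).2 0) + ((q + 2 * s : ℕ) : ZMod 2))
        + b * ((∑ i, (ts i).1 0) + ((q + 2 * s : ℕ) : ZMod 2)))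
        = S1 + ((q + 2 * s : ℕ) : ZMod 2) * (a + b) := by
      simp only [hS1, Finset.mul_sum, Finset.sum_add_distrib]
      rw [mul_add, mul_add, Finset.mul_sum, Finset.mul_sum]
      ring
    rw [harg, chi_add', chi_nat']
  rw [hsplit, hRHS]
  have hμpow : (μ : F) ^ q * ((μ : F) ^ s) ^ 2 = (μ : F) ^ (q + 2 * s) := by
    rw [← pow_mul, ← pow_add]; ring_nf
  calc (μ:F) ^ q * (-1:F) ^ S1.val * ((μ:F) ^ s) ^ 2 * ((-1:F) ^ (a + b).val) ^ (q + 2 * s)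
      = ((μ:F) ^ q * ((μ:F) ^ s) ^ 2)
        * ((-1:F) ^ S1.val * ((-1:F) ^ (a + b).val) ^ (q + 2 * s)) := by ring
    _ = (μ:F) ^ (q + 2 * s)
        * ((-1:F) ^ S1.val * ((-1:F) ^ (a + b).val) ^ (q + 2 * s)) := by rw [hμpow]
end
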